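/- Let ε ∈ (0,1), r₀ = ε³, N = (1−ε)/(ε·r₀) (assumed an integer), Θ = ε/r₀, and let μ = Σ_{j=1}^N ε·H¹|_{E_j} + Θ·H¹|_H with E_j = [0,r₀] × {r_j}, H = [0,r₀] × {0}, where (r_j) satisfies r_{j+1} ≤ r_j/2 and r₀ > r₁. Then for x ∈ H and r ≥ r₀, one has μ(B(x,r)) ≥ Θ·r₀ = ε and β_{2,μ}(B(x,r))² ≤ C·ε·r₀³/r² for an absolute constant C; consequently ∫_{r₀}^∞ β_{2,μ}(B(x,r))² dr/μ(B(x,r)) ≤ C'·r₀² = C'·ε⁶ for an absolute constant C'. -/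

import Mathlib

open MeasureTheory Metric
open scoped ENNReal NNReal

/-- The horizontal segment `[0, r₀] × {y}` in the plane. -/
def seg (r₀ y : ℝ) : Set (EuclideanSpace ℝ (Fin 2)) :=
  {p | p 0 ∈ Set.Icc 0 r₀ ∧ p 1 = y}

/-- The measure `μ = Σ_{j=1}^N ε·H¹|_{E_j} + Θ·H¹|_H`. -/
noncomputable def nuMeas (r : ℕ → ℝ) (N : ℕ) (δ Θ : ℝ) : Measure (EuclideanSpace ℝ (Fin 2)) :=
  (∑ j ∈ Finset.Icc 1 N, ENNReal.ofReal δ • (μH[1].restrict (seg (r 0) (r j)))) +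
    ENNReal.ofReal Θ • (μH[1].restrict (seg (r 0) 0))

/-- The `L²` beta-number (squared) of a set `B` with respect to a measure `μ`. -/
noncomputable def beta2sq (μ : Measure (EuclideanSpace ℝ (Fin 2)))
    (B : Set (EuclideanSpace ℝ (Fin 2))) : ℝ :=
  sInf {v : ℝ | ∃ a b : EuclideanSpace ℝ (Fin 2), a ≠ b ∧
    v = (1 / (μ B).toReal) *
      ∫ y in B, (Metric.infDist y (affineSpan ℝ ({a, b} : Set (EuclideanSpace ℝ (Fin 2))) :
        Set (EuclideanSpace ℝ (Fin 2))) / Metric.diam B) ^ 2 ∂μ}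


noncomputable def pt (s u : ℝ) : EuclideanSpace ℝ (Fin 2) :=
  (WithLp.equiv 2 (Fin 2 → ℝ)).symm ![s, u]
@[simp] lemma pt_apply0 (s u : ℝ) : pt s u 0 = s := rfl
@[simp] lemma pt_apply1 (s u : ℝ) : pt s u 1 = u := rfl
lemma pt_eta (x : EuclideanSpace ℝ (Fin 2)) : pt (x 0) (x 1) = x := by
  ext i; fin_cases i <;> rfl
lemma dist_pt (s u s' u' : ℝ) :
    dist (pt s u) (pt s' u') = Real.sqrt ((s - s') ^ 2 + (u - u') ^ 2) := by
  rw [EuclideanSpace.dist_eq]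
  simp [Fin.sum_univ_two, Real.dist_eq, sq_abs]
lemma diam_ball_ge (x : EuclideanSpace ℝ (Fin 2)) {ρ : ℝ} (hρ : 0 < ρ) :
    ρ ≤ Metric.diam (Metric.ball x ρ) := by
  have hx := pt_eta x
  set x0 := x 0; set x1 := x 1
  have hp : pt (x0 + ρ/2) x1 ∈ Metric.ball x ρ := by
    rw [mem_ball, ← hx, dist_pt]
    rw [show x0 + ρ/2 - x0 = ρ/2 by ring, sub_self]
    rw [Real.sqrt_lt' hρ]
    nlinarith
  have hq : pt (x0 - ρ/2) x1 ∈ Metric.ball x ρ := by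
    rw [mem_ball, ← hx, dist_pt]
    rw [show x0 - ρ/2 - x0 = -(ρ/2) by ring, sub_self]
    rw [Real.sqrt_lt' hρ]
    nlinarith
  have := Metric.dist_le_diam_of_mem Metric.isBounded_ball hp hq
  rw [dist_pt] at this
  rw [show x0 + ρ/2 - (x0 - ρ/2) = ρ by ring, sub_self] at this
  calc ρ = Real.sqrt (ρ^2 + 0^2) := by
        rw [show (0:ℝ)^2 = 0 by ring, add_zero, Real.sqrt_sq hρ.le]
    _ ≤ _ := this

lemma isom_pt (u : ℝ) : Isometry (fun t : ℝ => pt t u) := by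
  apply Isometry.of_dist_eq
  intro a b
  rw [dist_pt]
  simp [Real.dist_eq, Real.sqrt_sq_eq_abs]
lemma image_pt (u : ℝ) (s : Set ℝ) :
    (fun t : ℝ => pt t u) '' s = {p : EuclideanSpace ℝ (Fin 2) | p 0 ∈ s ∧ p 1 = u} := by
  ext p
  constructor
  · rintro ⟨t, ht, rfl⟩; exact ⟨ht, rfl⟩
  · rintro ⟨h0, h1⟩; exact ⟨p 0, h0, by rw [← h1]; exact pt_eta p⟩
lemma hm_coords (u : ℝ) (s : Set ℝ) :
    μH[1] {p : EuclideanSpace ℝ (Fin 2) | p 0 ∈ s ∧ p 1 = u} = volume s := by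
  rw [← image_pt, Isometry.hausdorffMeasure_image (isom_pt u) (Or.inl one_pos.le),
    MeasureTheory.hausdorffMeasure_real]
lemma hm_seg (r₀ u : ℝ) : μH[1] (seg r₀ u) = ENNReal.ofReal r₀ := by
  rw [show seg r₀ u = {p : EuclideanSpace ℝ (Fin 2) | p 0 ∈ Set.Icc 0 r₀ ∧ p 1 = u} from rfl,
    hm_coords, Real.volume_Icc, sub_zero]
lemma lineMap_pt (t : ℝ) : AffineMap.lineMap (pt 0 0) (pt 1 0) t = pt t 0 := by
  ext i
  fin_cases i <;>
    simp [AffineMap.lineMap_apply_module, PiLp.add_apply, PiLp.smul_apply, PiLp.sub_apply]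

lemma strip_lower {r₀ u ρ x0 : ℝ} (hr₀ : 0 < r₀) (hx0 : x0 ∈ Set.Icc 0 r₀) (hρ : r₀ ≤ ρ)
    (hu0 : 0 ≤ u) (hu : u ≤ ρ / 2) :
    ENNReal.ofReal (3 / 5 * r₀) ≤ μH[1] (Metric.ball (pt x0 0) ρ ∩ seg r₀ u) := by
  obtain ⟨hx0l, hx0r⟩ := hx0
  have hρ0 : 0 < ρ := lt_of_lt_of_le hr₀ hρ
  set l := max 0 (x0 - 4/5*ρ) with hl
  set u' := min r₀ (x0 + 4/5*ρ) with hu'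
  have hsub : {p : EuclideanSpace ℝ (Fin 2) | p 0 ∈ Set.Ioo l u' ∧ p 1 = u} ⊆
      Metric.ball (pt x0 0) ρ ∩ seg r₀ u := by
    rintro p ⟨⟨h1, h2⟩, h3⟩
    have hp0l : x0 - 4/5*ρ < p 0 := lt_of_le_of_lt (le_max_right _ _) h1
    have hp0r : p 0 < x0 + 4/5*ρ := lt_of_lt_of_le h2 (min_le_right _ _)
    constructor
    · rw [mem_ball, ← pt_eta p, h3, dist_pt, Real.sqrt_lt' hρ0]
      nlinarith
    · exact ⟨⟨le_trans (le_max_left _ _) h1.le, le_trans h2.le (min_le_left _ _)⟩, h3⟩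
  calc ENNReal.ofReal (3/5 * r₀) ≤ ENNReal.ofReal (u' - l) := by
        apply ENNReal.ofReal_le_ofReal
        have h1 : 4/5 * r₀ ≤ u' := le_min (by linarith) (by nlinarith)
        have h2 : l ≤ 1/5 * r₀ := max_le (by linarith) (by nlinarith)
        linarith
    _ = μH[1] {p : EuclideanSpace ℝ (Fin 2) | p 0 ∈ Set.Ioo l u' ∧ p 1 = u} := by
        rw [hm_coords, Real.volume_Ioo]
    _ ≤ _ := measure_mono hsub

lemma base_lower {r₀ ρ x0 : ℝ} (hr₀ : 0 < r₀) (hx0 : x0 ∈ Set.Icc 0 r₀) (hρ : r₀ ≤ ρ) :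
    ENNReal.ofReal r₀ ≤ μH[1] (Metric.ball (pt x0 0) ρ ∩ seg r₀ 0) := by
  obtain ⟨hx0l, hx0r⟩ := hx0
  have hρ0 : 0 < ρ := lt_of_lt_of_le hr₀ hρ
  have hsub : {p : EuclideanSpace ℝ (Fin 2) | p 0 ∈ Set.Ioo 0 r₀ ∧ p 1 = 0} ⊆
      Metric.ball (pt x0 0) ρ ∩ seg r₀ 0 := by
    rintro p ⟨⟨h1, h2⟩, h3⟩
    constructor
    · rw [mem_ball, ← pt_eta p, h3, dist_pt, Real.sqrt_lt' hρ0]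
      nlinarith
    · exact ⟨⟨h1.le, h2.le⟩, h3⟩
  calc ENNReal.ofReal r₀ = μH[1] {p : EuclideanSpace ℝ (Fin 2) | p 0 ∈ Set.Ioo 0 r₀ ∧ p 1 = 0} := by
        rw [hm_coords, Real.volume_Ioo, sub_zero]
    _ ≤ _ := measure_mono hsub

lemma infDist_le_of_seg {r₀ u : ℝ} (hu : 0 ≤ u) {y : EuclideanSpace ℝ (Fin 2)} (hy : y ∈ seg r₀ u) :
    Metric.infDist y ((affineSpan ℝ ({pt 0 0, pt 1 0} : Set (EuclideanSpace ℝ (Fin 2)))) :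
      Set (EuclideanSpace ℝ (Fin 2))) ≤ u := by
  have hz : AffineMap.lineMap (pt 0 0) (pt 1 0) (y 0) ∈
      ((affineSpan ℝ ({pt 0 0, pt 1 0} : Set (EuclideanSpace ℝ (Fin 2)))) :
        Set (EuclideanSpace ℝ (Fin 2))) := AffineMap.lineMap_mem_affineSpan_pair _ _ _
  refine le_trans (Metric.infDist_le_dist_of_mem hz) ?_
  rw [lineMap_pt]
  nth_rewrite 1 [← pt_eta y]
  rw [hy.2, dist_pt, sub_self]
  rw [show (0:ℝ)^2 = 0 by ring, zero_add, sub_zero, Real.sqrt_sq hu]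

lemma infDist_zero_of_seg {r₀ : ℝ} {y : EuclideanSpace ℝ (Fin 2)} (hy : y ∈ seg r₀ 0) :
    Metric.infDist y ((affineSpan ℝ ({pt 0 0, pt 1 0} : Set (EuclideanSpace ℝ (Fin 2)))) :
      Set (EuclideanSpace ℝ (Fin 2))) = 0 := by
  apply Metric.infDist_zero_of_mem
  have hz := AffineMap.lineMap_mem_affineSpan_pair (k := ℝ) (y 0) (pt 0 0) (pt 1 0)
  rw [lineMap_pt] at hz
  rwa [show pt (y 0) 0 = y by rw [← hy.2]; exact pt_eta y] at hz

lemma restrict_finset_sum' {ι : Type*} {α : Type*} [MeasurableSpace α] (s : Finset ι)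
    (μ : ι → Measure α) (t : Set α) :
    (∑ i ∈ s, μ i).restrict t = ∑ i ∈ s, (μ i).restrict t := by
  simp_rw [← Measure.restrictₗ_apply]
  exact map_sum _ _ _

lemma geom_quarter_bound (N : ℕ) : ∑ j ∈ Finset.Icc 1 N, ((1:ℝ)/4) ^ j ≤ 1/3 := by
  have h : Finset.Icc 1 N = Finset.Ico 1 (N + 1) := by rw [Finset.Ico_add_one_right_eq_Icc]
  rw [h, Finset.sum_Ico_eq_sum_range]
  simp only [Nat.add_sub_cancel]
  have h1 : ∀ i, ((1:ℝ)/4) ^ (1 + i) = (1/4) * (1/4)^i := fun i => by rw [pow_add, pow_one]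
  rw [Finset.sum_congr rfl fun i _ => h1 i, ← Finset.mul_sum]
  rw [geom_sum_eq (by norm_num : ((1:ℝ)/4) ≠ 1)]
  have h2 : (((1:ℝ)/4)^N - 1)/(1/4 - 1) = (1 - (1/4)^N) * (4/3) := by ring
  rw [h2]
  have h4 : (0:ℝ) ≤ (1/4:ℝ)^N := by positivity
  nlinarith

lemma pow_two_pow_sq (j : ℕ) : (((2:ℝ)^j))^2 = 4^j := by
  rw [← pow_mul, mul_comm, pow_mul]; norm_num

lemma rpow_neg_two_eq {t : ℝ} (ht : 0 < t) : t ^ (-2:ℝ) = (t^2)⁻¹ := by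
  rw [show (-2:ℝ) = ((-2:ℤ):ℝ) by norm_num, Real.rpow_intCast]
  simp [zpow_neg]

lemma beta2sq_nonneg (μ : Measure (EuclideanSpace ℝ (Fin 2)))
    (B : Set (EuclideanSpace ℝ (Fin 2))) : 0 ≤ beta2sq μ B := by
  apply Real.sInf_nonneg
  rintro v ⟨a, b, -, rfl⟩
  exact mul_nonneg (by positivity) (integral_nonneg fun y => sq_nonneg _)

/-- For the measure of Theorem 1.3 (`r₀ = ε³`, `N·ε·r₀ = 1-ε`, `Θ = ε/r₀`): for `x ∈ H` and
`ρ ≥ r₀` one has `μ(B(x,ρ)) ≥ ε` and `β² ≤ C·ε·r₀³/ρ²`, and consequently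
`∫_{r₀}^∞ β²(B(x,ρ)) dρ/μ(B(x,ρ)) ≤ C'·ε⁶`, for absolute constants `C, C'`. -/
theorem stmt_13 : ∃ C C' : ℝ, 0 < C ∧ 0 < C' ∧
    ∀ (ε : ℝ) (_ : ε ∈ Set.Ioo (0 : ℝ) 1) (N : ℕ) (r : ℕ → ℝ) (Θ : ℝ),
      r 0 = ε ^ 3 → (N : ℝ) * ε * r 0 = 1 - ε → Θ = ε / r 0 →
      (∀ j ≤ N, 0 < r j) → (∀ j < N, r (j + 1) ≤ r j / 2) →
      ∀ x ∈ seg (r 0) 0,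
        (∀ ρ : ℝ, r 0 ≤ ρ →
          ENNReal.ofReal ε ≤ nuMeas r N ε Θ (Metric.ball x ρ) ∧
          beta2sq (nuMeas r N ε Θ) (Metric.ball x ρ) ≤ C * ε * (r 0) ^ 3 / ρ ^ 2) ∧
        ∫ ρ in Set.Ioi (r 0),
            beta2sq (nuMeas r N ε Θ) (Metric.ball x ρ) /
              (nuMeas r N ε Θ (Metric.ball x ρ)).toReal ≤ C' * ε ^ 6 := by
  refine ⟨1, 1, one_pos, one_pos, ?_⟩
  rintro ε ⟨hε0, hε1⟩ N r Θ hr0 hNeq hΘ hrpos hrstep x hx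
  have hr₀ : 0 < r 0 := by rw [hr0]; positivity
  have hΘ0 : 0 ≤ Θ := by rw [hΘ]; positivity
  have hΘr : Θ * r 0 = ε := by rw [hΘ]; field_simp
  have hNpos : 0 < N := by
    rcases Nat.eq_zero_or_pos N with h | h
    · exfalso; rw [h] at hNeq; simp at hNeq; linarith
    · exact h
  -- r j ≤ r 0 / 2 ^ j for 1 ≤ j ≤ N
  have hrj : ∀ j, 1 ≤ j → j ≤ N → r j ≤ r 0 / 2 ^ j := by
    intro j
    induction j with
    | zero => omega
    | succ n ih =>
      intro _ h2
      rcases Nat.eq_zero_or_pos n with hn | hn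
      · subst hn
        have := hrstep 0 (by omega)
        simpa using this
      · have h3 := ih hn (by omega)
        have h4 := hrstep n (by omega)
        have h2n : (0:ℝ) < 2 ^ n := by positivity
        calc r (n+1) ≤ r n / 2 := h4
          _ ≤ (r 0 / 2^n) / 2 := by linarith
          _ = r 0 / 2^(n+1) := by rw [pow_succ]; ring
  set μ := nuMeas r N ε Θ with hμ
  have hxpt : x = pt (x 0) 0 := by rw [← hx.2]; exact (pt_eta x).symm
  -- general measure expansion
  have hμapp : ∀ S : Set (EuclideanSpace ℝ (Fin 2)), MeasurableSet S →
      μ S = (∑ j ∈ Finset.Icc 1 N, ENNReal.ofReal ε * μH[1] (S ∩ seg (r 0) (r j))) +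
        ENNReal.ofReal Θ * μH[1] (S ∩ seg (r 0) 0) := by
    intro S hS
    rw [hμ, nuMeas, Measure.add_apply, Measure.finset_sum_apply]
    simp_rw [Measure.smul_apply, smul_eq_mul, Measure.restrict_apply hS]
  -- key per-radius facts
  have key : ∀ ρ : ℝ, r 0 ≤ ρ →
      ENNReal.ofReal ε ≤ μ (Metric.ball x ρ) ∧
      μ (Metric.ball x ρ) ≠ ⊤ ∧
      (3/5 : ℝ) ≤ (μ (Metric.ball x ρ)).toReal ∧
      ε ≤ (μ (Metric.ball x ρ)).toReal ∧
      beta2sq μ (Metric.ball x ρ) ≤ (5/9) * (ε * (r 0)^3 / ρ^2) := by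
    intro ρ hρ
    have hρ0 : 0 < ρ := lt_of_lt_of_le hr₀ hρ
    set B := Metric.ball x ρ with hB
    have hBapp := hμapp B measurableSet_ball
    -- base strip bounds
    have hbase : ENNReal.ofReal (r 0) ≤ μH[1] (B ∩ seg (r 0) 0) := by
      rw [hB, hxpt]; exact base_lower hr₀ hx.1 hρ
    have hstrip : ∀ j ∈ Finset.Icc 1 N,
        ENNReal.ofReal (3/5 * r 0) ≤ μH[1] (B ∩ seg (r 0) (r j)) := by
      intro j hj
      rw [Finset.mem_Icc] at hj
      have hrjle : r j ≤ ρ / 2 := by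
        have h1 := hrj j hj.1 hj.2
        have h2 : r 0 / 2^j ≤ r 0 / 2 := by
          apply div_le_div_of_nonneg_left hr₀.le two_pos
          calc (2:ℝ) = 2^1 := (pow_one 2).symm
            _ ≤ 2^j := pow_le_pow_right₀ one_le_two hj.1
        linarith
      rw [hB, hxpt]
      exact strip_lower hr₀ hx.1 hρ (hrpos j hj.2).le hrjle
    -- lower bound ε
    have hlb1 : ENNReal.ofReal ε ≤ μ B := by
      rw [hBapp]
      calc ENNReal.ofReal ε = ENNReal.ofReal Θ * ENNReal.ofReal (r 0) := by
            rw [← ENNReal.ofReal_mul hΘ0, hΘr]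
        _ ≤ ENNReal.ofReal Θ * μH[1] (B ∩ seg (r 0) 0) := by
            exact mul_le_mul_right hbase _
        _ ≤ _ := self_le_add_left _ _
    -- lower bound 3/5
    have hlb2 : ENNReal.ofReal (3/5) ≤ μ B := by
      rw [hBapp]
      have h1 : ∀ j ∈ Finset.Icc 1 N,
          ENNReal.ofReal (ε * (3/5 * r 0)) ≤ ENNReal.ofReal ε * μH[1] (B ∩ seg (r 0) (r j)) := by
        intro j hj
        rw [ENNReal.ofReal_mul hε0.le]
        exact mul_le_mul_right (hstrip j hj) _
      calc ENNReal.ofReal (3/5)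
          ≤ ENNReal.ofReal ((N:ℝ) * (ε * (3/5 * r 0)) + ε) := by
            apply ENNReal.ofReal_le_ofReal
            have : (N:ℝ) * (ε * (3/5 * r 0)) = (3/5) * ((N:ℝ) * ε * r 0) := by ring
            rw [this, hNeq]; linarith
        _ = (N:ℝ≥0∞) * ENNReal.ofReal (ε * (3/5 * r 0)) + ENNReal.ofReal ε := by
            rw [ENNReal.ofReal_add (by positivity) hε0.le, ENNReal.ofReal_mul (Nat.cast_nonneg N),
              ENNReal.ofReal_natCast]
        _ ≤ (∑ j ∈ Finset.Icc 1 N, ENNReal.ofReal ε * μH[1] (B ∩ seg (r 0) (r j))) +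
            ENNReal.ofReal Θ * μH[1] (B ∩ seg (r 0) 0) := by
            apply add_le_add
            · calc (N:ℝ≥0∞) * ENNReal.ofReal (ε * (3/5 * r 0))
                  = ∑ _j ∈ Finset.Icc 1 N, ENNReal.ofReal (ε * (3/5 * r 0)) := by
                    rw [Finset.sum_const, Nat.card_Icc, Nat.add_sub_cancel, nsmul_eq_mul]
                _ ≤ _ := Finset.sum_le_sum h1
            · calc ENNReal.ofReal ε
                  = ENNReal.ofReal Θ * ENNReal.ofReal (r 0) := by
                    rw [← ENNReal.ofReal_mul hΘ0, hΘr]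
                _ ≤ _ := mul_le_mul_right hbase _
    -- upper bound / finiteness
    have hfin : μ B ≠ ⊤ := by
      have hub : μ B ≤ (N:ℝ≥0∞) * (ENNReal.ofReal ε * ENNReal.ofReal (r 0)) +
          ENNReal.ofReal Θ * ENNReal.ofReal (r 0) := by
        rw [hBapp]
        apply add_le_add
        · calc ∑ j ∈ Finset.Icc 1 N, ENNReal.ofReal ε * μH[1] (B ∩ seg (r 0) (r j))
              ≤ ∑ _j ∈ Finset.Icc 1 N, ENNReal.ofReal ε * ENNReal.ofReal (r 0) := by
                apply Finset.sum_le_sum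
                intro j _
                apply mul_le_mul_right
                calc μH[1] (B ∩ seg (r 0) (r j)) ≤ μH[1] (seg (r 0) (r j)) :=
                      measure_mono Set.inter_subset_right
                  _ = ENNReal.ofReal (r 0) := hm_seg _ _
            _ = (N:ℝ≥0∞) * (ENNReal.ofReal ε * ENNReal.ofReal (r 0)) := by
                rw [Finset.sum_const, Nat.card_Icc, Nat.add_sub_cancel, nsmul_eq_mul]
        · apply mul_le_mul_right
          calc μH[1] (B ∩ seg (r 0) 0) ≤ μH[1] (seg (r 0) 0) :=
                measure_mono Set.inter_subset_right
            _ = ENNReal.ofReal (r 0) := hm_seg _ _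
      exact ne_top_of_le_ne_top (by finiteness) hub
    have hT35 : (3/5 : ℝ) ≤ (μ B).toReal := by
      have := ENNReal.toReal_mono hfin hlb2
      rwa [ENNReal.toReal_ofReal (by norm_num)] at this
    have hTε : ε ≤ (μ B).toReal := by
      have := ENNReal.toReal_mono hfin hlb1
      rwa [ENNReal.toReal_ofReal hε0.le] at this
    refine ⟨hlb1, hfin, hT35, hTε, ?_⟩
    -- beta bound
    set a : EuclideanSpace ℝ (Fin 2) := pt 0 0 with ha
    set b : EuclideanSpace ℝ (Fin 2) := pt 1 0 with hb
    have hab : a ≠ b := by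
      intro h
      have h0 : a 0 = b 0 := by rw [h]
      rw [ha, hb, pt_apply0, pt_apply0] at h0
      norm_num at h0
    set L : Set (EuclideanSpace ℝ (Fin 2)) :=
      (affineSpan ℝ ({a, b} : Set (EuclideanSpace ℝ (Fin 2))) :
        Set (EuclideanSpace ℝ (Fin 2))) with hL
    set D := Metric.diam B with hD
    have hDρ : ρ ≤ D := by rw [hD, hB]; exact diam_ball_ge x hρ0
    have hD0 : 0 < D := lt_of_lt_of_le hρ0 hDρ
    set g : EuclideanSpace ℝ (Fin 2) → ℝ := fun y => (Metric.infDist y L / D) ^ 2 with hg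
    have hg_cont : Continuous g := ((Metric.continuous_infDist_pt L).div_const D).pow 2
    -- the integral bound
    have hIbound : ∫ y in B, g y ∂μ ≤ ε * (r 0)^3 / (3 * ρ^2) := by
      rw [integral_eq_lintegral_of_nonneg_ae (Filter.Eventually.of_forall fun y => sq_nonneg _)
        hg_cont.aestronglyMeasurable]
      apply ENNReal.toReal_le_of_le_ofReal (by positivity)
      -- decompose the restricted measure
      have hrestr : μ.restrict B =
          (∑ j ∈ Finset.Icc 1 N, ENNReal.ofReal ε • (μH[1].restrict (B ∩ seg (r 0) (r j)))) +
            ENNReal.ofReal Θ • (μH[1].restrict (B ∩ seg (r 0) 0)) := by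
        rw [hμ, nuMeas, Measure.restrict_add, restrict_finset_sum']
        congr 1
        · apply Finset.sum_congr rfl
          intro j _
          rw [Measure.restrict_smul, Measure.restrict_restrict measurableSet_ball]
        · rw [Measure.restrict_smul, Measure.restrict_restrict measurableSet_ball]
      rw [hrestr, lintegral_add_measure, lintegral_finset_sum_measure]
      -- strip integrals
      have hstripInt : ∀ j ∈ Finset.Icc 1 N,
          ∫⁻ y, ENNReal.ofReal (g y) ∂(ENNReal.ofReal ε • (μH[1].restrict (B ∩ seg (r 0) (r j))))
            ≤ ENNReal.ofReal (ε * ((r j / ρ)^2 * r 0)) := by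
        intro j hj
        rw [Finset.mem_Icc] at hj
        rw [lintegral_smul_measure]
        rw [ENNReal.ofReal_mul hε0.le]
        apply mul_le_mul_right
        calc ∫⁻ y in B ∩ seg (r 0) (r j), ENNReal.ofReal (g y) ∂μH[1]
            ≤ ∫⁻ _y in B ∩ seg (r 0) (r j), ENNReal.ofReal ((r j / ρ)^2) ∂μH[1] := by
              apply setLIntegral_mono measurable_const
              intro y hy
              apply ENNReal.ofReal_le_ofReal
              rw [hg]
              have h1 : Metric.infDist y L ≤ r j := infDist_le_of_seg (hrpos j hj.2).le hy.2
              have h2 : Metric.infDist y L / D ≤ r j / ρ :=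
                div_le_div₀ (hrpos j hj.2).le h1 hρ0 hDρ
              have h3 : 0 ≤ Metric.infDist y L / D :=
                div_nonneg Metric.infDist_nonneg hD0.le
              exact pow_le_pow_left₀ h3 h2 2
          _ = ENNReal.ofReal ((r j / ρ)^2) * μH[1] (B ∩ seg (r 0) (r j)) :=
              setLIntegral_const _ _
          _ ≤ ENNReal.ofReal ((r j / ρ)^2) * ENNReal.ofReal (r 0) := by
              apply mul_le_mul_right
              calc μH[1] (B ∩ seg (r 0) (r j)) ≤ μH[1] (seg (r 0) (r j)) :=
                    measure_mono Set.inter_subset_right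
                _ = ENNReal.ofReal (r 0) := hm_seg _ _
          _ = ENNReal.ofReal ((r j / ρ)^2 * r 0) := by
              rw [ENNReal.ofReal_mul (by positivity)]
      -- base integral is zero
      have hbaseInt : ∫⁻ y, ENNReal.ofReal (g y)
          ∂(ENNReal.ofReal Θ • (μH[1].restrict (B ∩ seg (r 0) 0))) = 0 := by
        rw [lintegral_smul_measure]
        have : ∫⁻ y in B ∩ seg (r 0) 0, ENNReal.ofReal (g y) ∂μH[1] = 0 := by
          apply le_antisymm _ zero_le
          calc ∫⁻ y in B ∩ seg (r 0) 0, ENNReal.ofReal (g y) ∂μH[1]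
              ≤ ∫⁻ _y in B ∩ seg (r 0) 0, 0 ∂μH[1] := by
                apply setLIntegral_mono measurable_const
                intro y hy
                have h0 : Metric.infDist y L = 0 := infDist_zero_of_seg hy.2
                simp [hg, h0]
            _ = 0 := by rw [lintegral_const, zero_mul]
        rw [this, smul_zero]
      rw [hbaseInt, add_zero]
      calc ∑ j ∈ Finset.Icc 1 N,
            ∫⁻ y, ENNReal.ofReal (g y) ∂(ENNReal.ofReal ε • (μH[1].restrict (B ∩ seg (r 0) (r j))))
          ≤ ∑ j ∈ Finset.Icc 1 N, ENNReal.ofReal (ε * ((r j / ρ)^2 * r 0)) :=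
            Finset.sum_le_sum hstripInt
        _ = ENNReal.ofReal (∑ j ∈ Finset.Icc 1 N, ε * ((r j / ρ)^2 * r 0)) :=
            (ENNReal.ofReal_sum_of_nonneg fun j _ => by positivity).symm
        _ ≤ ENNReal.ofReal (ε * (r 0)^3 / (3 * ρ^2)) := by
            apply ENNReal.ofReal_le_ofReal
            have hterm : ∀ j ∈ Finset.Icc 1 N,
                ε * ((r j / ρ)^2 * r 0) ≤ (ε * r 0 * (r 0)^2 / ρ^2) * ((1:ℝ)/4)^j := by
              intro j hj
              rw [Finset.mem_Icc] at hj
              have hrj2 : (r j)^2 ≤ (r 0)^2 * ((1:ℝ)/4)^j := by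
                have h1 := hrj j hj.1 hj.2
                have h2 : (r j)^2 ≤ (r 0 / 2^j)^2 :=
                  pow_le_pow_left₀ (hrpos j hj.2).le h1 2
                calc (r j)^2 ≤ (r 0 / 2^j)^2 := h2
                  _ = (r 0)^2 * ((1:ℝ)/4)^j := by
                    rw [div_pow, pow_two_pow_sq, div_eq_mul_inv, one_div, inv_pow]
              have hρ2 : (0:ℝ) < ρ^2 := by positivity
              rw [div_pow]
              calc ε * ((r j)^2 / ρ^2 * r 0)
                  ≤ ε * (((r 0)^2 * ((1:ℝ)/4)^j) / ρ^2 * r 0) := by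
                    gcongr
                _ = (ε * r 0 * (r 0)^2 / ρ^2) * ((1:ℝ)/4)^j := by ring
            calc ∑ j ∈ Finset.Icc 1 N, ε * ((r j / ρ)^2 * r 0)
                ≤ ∑ j ∈ Finset.Icc 1 N, (ε * r 0 * (r 0)^2 / ρ^2) * ((1:ℝ)/4)^j :=
                  Finset.sum_le_sum hterm
              _ = (ε * r 0 * (r 0)^2 / ρ^2) * ∑ j ∈ Finset.Icc 1 N, ((1:ℝ)/4)^j := by
                  rw [Finset.mul_sum]
              _ ≤ (ε * r 0 * (r 0)^2 / ρ^2) * (1/3) := by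
                  apply mul_le_mul_of_nonneg_left (geom_quarter_bound N) (by positivity)
              _ = ε * (r 0)^3 / (3 * ρ^2) := by ring
    -- conclude beta bound
    have hmem : (1 / (μ B).toReal) * ∫ y in B, (Metric.infDist y
        ((affineSpan ℝ ({a, b} : Set (EuclideanSpace ℝ (Fin 2)))) :
          Set (EuclideanSpace ℝ (Fin 2))) / Metric.diam B) ^ 2 ∂μ ∈
        {v : ℝ | ∃ a' b' : EuclideanSpace ℝ (Fin 2), a' ≠ b' ∧
          v = (1 / (μ B).toReal) *
            ∫ y in B, (Metric.infDist y (affineSpan ℝ ({a', b'} : Set (EuclideanSpace ℝ (Fin 2))) :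
              Set (EuclideanSpace ℝ (Fin 2))) / Metric.diam B) ^ 2 ∂μ} := ⟨a, b, hab, rfl⟩
    have hbdd : BddBelow {v : ℝ | ∃ a' b' : EuclideanSpace ℝ (Fin 2), a' ≠ b' ∧
        v = (1 / (μ B).toReal) *
          ∫ y in B, (Metric.infDist y (affineSpan ℝ ({a', b'} : Set (EuclideanSpace ℝ (Fin 2))) :
            Set (EuclideanSpace ℝ (Fin 2))) / Metric.diam B) ^ 2 ∂μ} := by
      refine ⟨0, ?_⟩
      rintro v ⟨a', b', -, rfl⟩
      exact mul_nonneg (by positivity) (integral_nonneg fun y => sq_nonneg _)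
    have hbeta : beta2sq μ B ≤ (1 / (μ B).toReal) * ∫ y in B, (Metric.infDist y L / D) ^ 2 ∂μ :=
      csInf_le hbdd hmem
    have hT0 : (0:ℝ) < (μ B).toReal := lt_of_lt_of_le (by norm_num) hT35
    calc beta2sq μ B ≤ (1 / (μ B).toReal) * ∫ y in B, (Metric.infDist y L / D) ^ 2 ∂μ := hbeta
      _ ≤ (5/3) * (ε * (r 0)^3 / (3 * ρ^2)) := by
          apply mul_le_mul _ hIbound (integral_nonneg fun y => sq_nonneg _) (by norm_num)
          rw [div_le_iff₀ hT0]
          linarith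
      _ = (5/9) * (ε * (r 0)^3 / ρ^2) := by ring
  constructor
  · intro ρ hρ
    obtain ⟨h1, -, -, -, h5⟩ := key ρ hρ
    refine ⟨h1, ?_⟩
    have hq : 0 ≤ ε * (r 0)^3 / ρ^2 := by
      have : 0 < ρ := lt_of_lt_of_le hr₀ hρ
      positivity
    calc beta2sq μ (Metric.ball x ρ) ≤ (5/9) * (ε * (r 0)^3 / ρ^2) := h5
      _ ≤ 1 * ε * (r 0)^3 / ρ^2 := by rw [one_mul]; rw [mul_div_assoc] at *; linarith
  · -- integral part
    have hint_g : IntegrableOn (fun ρ : ℝ => (r 0)^3 * ρ ^ (-2:ℝ)) (Set.Ioi (r 0)) :=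
      (integrableOn_Ioi_rpow_of_lt (by norm_num) hr₀).const_mul _
    have hle : ∀ ρ ∈ Set.Ioi (r 0),
        beta2sq μ (Metric.ball x ρ) / (μ (Metric.ball x ρ)).toReal ≤ (r 0)^3 * ρ ^ (-2:ℝ) := by
      intro ρ hρ
      rw [Set.mem_Ioi] at hρ
      have hρ0 : 0 < ρ := lt_trans hr₀ hρ
      obtain ⟨-, -, -, h4, h5⟩ := key ρ hρ.le
      have hβ : beta2sq μ (Metric.ball x ρ) ≤ ε * (r 0)^3 / ρ^2 := by
        have hq : 0 ≤ ε * (r 0)^3 / ρ^2 := by positivity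
        linarith
      calc beta2sq μ (Metric.ball x ρ) / (μ (Metric.ball x ρ)).toReal
          ≤ (ε * (r 0)^3 / ρ^2) / ε := div_le_div₀ (by positivity) hβ hε0 h4
        _ = (r 0)^3 * (ρ^2)⁻¹ := by field_simp
        _ = (r 0)^3 * ρ ^ (-2:ℝ) := by rw [rpow_neg_two_eq hρ0]
    have hmono : ∫ ρ in Set.Ioi (r 0),
        beta2sq μ (Metric.ball x ρ) / (μ (Metric.ball x ρ)).toReal ≤
        ∫ ρ in Set.Ioi (r 0), (r 0)^3 * ρ ^ (-2:ℝ) := by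
      apply integral_mono_of_nonneg
      · exact Filter.Eventually.of_forall fun ρ =>
          div_nonneg (beta2sq_nonneg _ _) ENNReal.toReal_nonneg
      · exact hint_g
      · exact (ae_restrict_iff' measurableSet_Ioi).mpr (Filter.Eventually.of_forall hle)
    calc ∫ ρ in Set.Ioi (r 0),
          beta2sq μ (Metric.ball x ρ) / (μ (Metric.ball x ρ)).toReal
        ≤ ∫ ρ in Set.Ioi (r 0), (r 0)^3 * ρ ^ (-2:ℝ) := hmono
      _ = (r 0)^3 * ∫ ρ in Set.Ioi (r 0), ρ ^ (-2:ℝ) := by rw [integral_const_mul]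
      _ = (r 0)^3 * (-(r 0) ^ ((-2:ℝ) + 1) / ((-2:ℝ) + 1)) := by
          rw [integral_Ioi_rpow_of_lt (by norm_num) hr₀]
      _ = 1 * ε^6 := by
          rw [show (-2:ℝ) + 1 = -1 by norm_num, Real.rpow_neg_one]
          rw [hr0]
          field_simp
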